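/- Let q be an n×n real matrix with q(i,i) < 1 for an index i, let r ∈ ℝ^n, and let (q̄, r̄) be obtained from (q, r) by the pivot at i. Then for every vector v ∈ ℝ^n, v satisfies (I − q)v = r if and only if v satisfies (I − q̄)v = r̄. -/

import Mathlib

open Matrix

/-- The matrix produced by the pivot at index `i`. -/
noncomputable def pivotQ {n : ℕ} (q : Matrix (Fin n) (Fin n) ℝ) (i : Fin n) :
    Matrix (Fin n) (Fin n) ℝ := fun j p =>
  if p = i then 0
  else if j = i then q i p / (1 - q i i)
  else q j p + q j i * (q i p / (1 - q i i))

/-- The reward vector produced by the pivot at index `i`. -/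
noncomputable def pivotR {n : ℕ} (q : Matrix (Fin n) (Fin n) ℝ) (r : Fin n → ℝ)
    (i : Fin n) : Fin n → ℝ := fun j =>
  if j = i then r i / (1 - q i i) else r j + q j i * (r i / (1 - q i i))

lemma pivot_mulVec {n : ℕ} (q : Matrix (Fin n) (Fin n) ℝ) (i : Fin n)
    (v : Fin n → ℝ) (j : Fin n) :
    (pivotQ q i *ᵥ v) j =
      (if j = i then 0 else (q *ᵥ v) j - q j i * v i)
        + (if j = i then 1 else q j i) *
            (((q *ᵥ v) i - q i i * v i) / (1 - q i i)) := by
  by_cases hj : j = i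
  · subst hj
    simp only [mulVec, dotProduct, pivotQ, if_pos rfl, if_true]
    have h : ∀ p : Fin n,
        (if p = j then (0:ℝ) else q j p / (1 - q j j)) * v p
          = (q j p * v p) / (1 - q j j)
            - (if p = j then (q j j * v j) / (1 - q j j) else 0) := by
      intro p
      by_cases hp : p = j
      · subst hp; simp
      · simp [hp]; ring
    rw [Finset.sum_congr rfl fun p _ => h p, Finset.sum_sub_distrib,
      Finset.sum_ite_eq' Finset.univ j, ← Finset.sum_div]
    simp only [Finset.mem_univ, if_true]
    rw [sub_div]
    ring
  · simp only [mulVec, dotProduct, pivotQ, if_neg hj]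
    have h : ∀ p : Fin n,
        (if p = i then (0:ℝ) else
            q j p + q j i * (q i p / (1 - q i i))) * v p
          = (q j p * v p + q j i * ((q i p * v p) / (1 - q i i)))
            - (if p = i then
                q j i * v i + q j i * ((q i i * v i) / (1 - q i i)) else 0) := by
      intro p
      by_cases hp : p = i
      · subst hp; simp
      · simp [hp]; ring
    rw [Finset.sum_congr rfl fun p _ => h p, Finset.sum_sub_distrib,
      Finset.sum_ite_eq' Finset.univ i]
    simp only [Finset.mem_univ, if_true, Finset.sum_add_distrib,
      ← Finset.mul_sum, ← Finset.sum_div]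
    ring

/-- the pivot preserves the solution set of the linear system:
`(I − q) v = r` iff `(I − q̄) v = r̄`. -/
theorem pivot_preserves_solutions {n : ℕ} (q : Matrix (Fin n) (Fin n) ℝ)
    (r : Fin n → ℝ) (i : Fin n) (hii : q i i < 1) :
    ∀ v : Fin n → ℝ, (1 - q) *ᵥ v = r ↔ (1 - pivotQ q i) *ᵥ v = pivotR q r i := by
  intro v
  have hd : (1 : ℝ) - q i i ≠ 0 := by intro h; nlinarith
  rw [funext_iff, funext_iff]
  have key : ∀ j, ((1 - pivotQ q i) *ᵥ v) j =
      if j = i then (((1 - q) *ᵥ v) i) / (1 - q i i)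
      else ((1 - q) *ᵥ v) j + q j i * ((((1 - q) *ᵥ v) i) / (1 - q i i)) := by
    intro j
    rw [sub_mulVec, one_mulVec, sub_mulVec, one_mulVec]
    simp only [Pi.sub_apply, pivot_mulVec]
    by_cases hj : j = i
    · subst hj; simp only [if_pos rfl, ↓reduceIte]
      field_simp
      ring
    · simp only [if_neg hj]
      field_simp
      ring
  constructor
  · intro h j
    rw [key j, pivotR]
    by_cases hj : j = i
    · subst hj; simp [h]
    · simp [hj, h]
  · intro h j
    have hi : ((1 - q) *ᵥ v) i = r i := by
      have := h i
      rw [key i, if_pos rfl] at this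
      simp only [pivotR, if_pos rfl, ↓reduceIte] at this
      field_simp at this
      exact this
    by_cases hj : j = i
    · subst hj; exact hi
    · have := h j
      rw [key j, if_neg hj] at this
      simp only [pivotR, if_neg hj] at this
      rw [hi] at this
      linarith
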